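/- Let (U(σ))_{σ∈Q_N} be i.i.d. Gaussian with mean 0 and variance N. Then almost surely lim_{N→∞} N^{-1} ln(2^{-N} Σ_{σ∈Q_N} e^{−βU(σ)}) = p₀(β), where p₀(β) = β²/2 for 0 ≤ β ≤ β_c = √(2 ln 2) and p₀(β) = ββ_c − ln 2 for β > β_c. -/

import Mathlib

open MeasureTheory ProbabilityTheory

open Real Filter

open scoped NNReal ENNReal

abbrev Conf (N : ℕ) := Fin N → Bool

lemma card_conf (N : ℕ) : Fintype.card (Conf N) = 2 ^ N := by simp [Conf]

lemma gauss_shift (v : ℝ≥0) (hv : v ≠ 0) (t x : ℝ) :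
    Real.exp (t * x) * gaussianPDFReal 0 v x
      = Real.exp (v * t ^ 2 / 2) * gaussianPDFReal (v * t) v x := by
  have hv' : (v : ℝ) ≠ 0 := by exact_mod_cast hv
  simp only [gaussianPDFReal]
  rw [mul_left_comm, ← Real.exp_add, mul_left_comm, ← Real.exp_add]
  congr 2
  field_simp
  ring

lemma lintegral_exp_gaussianReal (v : ℝ≥0) (t : ℝ) :
    ∫⁻ x, ENNReal.ofReal (Real.exp (t * x)) ∂(gaussianReal 0 v)
      = ENNReal.ofReal (Real.exp ((v : ℝ) * t ^ 2 / 2)) := by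
  by_cases hv : v = 0
  · subst hv
    rw [gaussianReal_zero_var, lintegral_dirac]
    simp
  · rw [gaussianReal_of_var_ne_zero _ hv,
      lintegral_withDensity_eq_lintegral_mul _ (measurable_gaussianPDF 0 v)
        (by fun_prop : Measurable fun x : ℝ => ENNReal.ofReal (rexp (t * x)))]
    have : ∀ x : ℝ, gaussianPDF 0 v x * ENNReal.ofReal (Real.exp (t * x))
        = ENNReal.ofReal (Real.exp ((v : ℝ) * t ^ 2 / 2)) * gaussianPDF ((v : ℝ) * t) v x := by
      intro x
      rw [gaussianPDF, gaussianPDF, ← ENNReal.ofReal_mul (gaussianPDFReal_nonneg 0 v x),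
        ← ENNReal.ofReal_mul (Real.exp_pos _).le, mul_comm (gaussianPDFReal 0 v x),
        gauss_shift v hv t x]
    simp only [Pi.mul_apply, this]
    rw [lintegral_const_mul _ (measurable_gaussianPDF _ v), lintegral_gaussianPDF_eq_one _ hv,
      mul_one]

/-- Lower bound for the Gaussian measure of an interval `[a, b]` with `b ≤ 0`. -/
lemma gaussianReal_Icc_ge {v : ℝ≥0} (hv : v ≠ 0) {a b : ℝ} (hab : a ≤ b) (hb : b ≤ 0) :
    (b - a) * gaussianPDFReal 0 v a ≤ (gaussianReal 0 v (Set.Icc a b)).toReal := by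
  rw [gaussianReal_apply_eq_integral 0 hv, ENNReal.toReal_ofReal
    (setIntegral_nonneg measurableSet_Icc (fun x _ => gaussianPDFReal_nonneg 0 v x))]
  have hmono : ∀ x ∈ Set.Icc a b, gaussianPDFReal 0 v a ≤ gaussianPDFReal 0 v x := by
    intro x hx
    simp only [gaussianPDFReal, sub_zero]
    refine mul_le_mul_of_nonneg_left (Real.exp_le_exp.2 ?_) (by positivity)
    have hx2 : x ^ 2 ≤ a ^ 2 := by
      have := sq_le_sq' (by linarith [hx.1] : -(-a) ≤ x) (by linarith [hx.2] : x ≤ -a)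
      simpa using this
    have h2v : (0:ℝ) < 2 * v := by positivity
    rw [div_le_div_iff_of_pos_right h2v]
    linarith
  calc (b - a) * gaussianPDFReal 0 v a
      = ∫ _ in Set.Icc a b, gaussianPDFReal 0 v a := by
        rw [setIntegral_const, measureReal_def, Real.volume_Icc, ENNReal.toReal_ofReal (by linarith),
          smul_eq_mul]
    _ ≤ ∫ x in Set.Icc a b, gaussianPDFReal 0 v x := by
        refine setIntegral_mono_on (integrableOn_const ?_)
          ((integrable_gaussianPDFReal 0 v).integrableOn) measurableSet_Icc hmono
        rw [Real.volume_Icc]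
        exact ENNReal.ofReal_ne_top

section
variable {Ω : Type*} [MeasurableSpace Ω] {P : Measure Ω} [IsProbabilityMeasure P]
  {U : (N : ℕ) → Conf N → Ω → ℝ}

/-- Markov's inequality, formulated with a lintegral bound. -/
lemma markov_exp {g : Ω → ℝ} (hg : AEMeasurable g P) {a E : ℝ}
    (hE : ∫⁻ ω, ENNReal.ofReal (g ω) ∂P ≤ ENNReal.ofReal E) (ha : 0 < a) :
    P {ω | a ≤ g ω} ≤ ENNReal.ofReal (E / a) := by
  have h1 : {ω | a ≤ g ω} ⊆ {ω | ENNReal.ofReal a ≤ ENNReal.ofReal (g ω)} :=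
    fun ω hω => ENNReal.ofReal_le_ofReal hω
  have h2 := mul_meas_ge_le_lintegral₀ (hg.ennreal_ofReal) (ENNReal.ofReal a)
  have h3 : ENNReal.ofReal a * P {ω | a ≤ g ω} ≤ ENNReal.ofReal E :=
    le_trans (le_trans (mul_le_mul_right (measure_mono h1) _) h2) hE
  rw [ENNReal.ofReal_div_of_pos ha,
    ENNReal.le_div_iff_mul_le (Or.inl (by simpa using ha)) (Or.inl ENNReal.ofReal_ne_top)]
  rwa [mul_comm]

/-- Borel–Cantelli with an eventual bound on the probabilities. -/
lemma bc_eventually {A : ℕ → Set Ω} {f : ℕ → ℝ≥0∞} (hf : ∑' n, f n ≠ ∞)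
    (h : ∀ᶠ n in atTop, P (A n) ≤ f n) : ∀ᵐ ω ∂P, ∀ᶠ n in atTop, ω ∉ A n := by
  obtain ⟨n₀, hn₀⟩ := eventually_atTop.1 h
  have hsum : ∑' n, P (A (n + n₀)) ≠ ∞ := by
    refine ne_top_of_le_ne_top hf ?_
    calc ∑' n, P (A (n + n₀)) ≤ ∑' n, f (n + n₀) :=
          ENNReal.tsum_le_tsum fun n => hn₀ _ (Nat.le_add_left _ _)
      _ ≤ ∑' n, f n := ENNReal.tsum_comp_le_tsum_of_injective (add_left_injective n₀) f
  filter_upwards [ae_eventually_notMem hsum] with ω hω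
  obtain ⟨m, hm⟩ := eventually_atTop.1 hω
  refine eventually_atTop.2 ⟨m + n₀, fun n hn => ?_⟩
  have : n - n₀ + n₀ = n := Nat.sub_add_cancel (le_trans (Nat.le_add_left _ _) hn)
  rw [← this]
  exact hm _ (by omega)

lemma tsum_of_summable_ne_top {f : ℕ → ℝ} (h0 : ∀ n, 0 ≤ f n) (hs : Summable f) :
    ∑' n : ℕ, ENNReal.ofReal (f n) ≠ ∞ := by
  rw [← ENNReal.ofReal_tsum_of_nonneg h0 hs]
  exact ENNReal.ofReal_ne_top

lemma summable_const_mul_exp {c : ℝ} (hc : 0 < c) (C : ℝ) :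
    Summable (fun n : ℕ => C * Real.exp (-c * n)) := by
  have : Summable (fun n : ℕ => (Real.exp (-c)) ^ n) :=
    summable_geometric_of_lt_one (Real.exp_pos _).le
      (Real.exp_lt_one_iff.2 (by linarith))
  simpa [← Real.exp_nat_mul, mul_comm] using this.mul_left C

lemma tsum_exp_ne_top {c : ℝ} (hc : 0 < c) {C : ℝ} (hC : 0 ≤ C) :
    ∑' n : ℕ, ENNReal.ofReal (C * Real.exp (-c * n)) ≠ ∞ :=
  tsum_of_summable_ne_top (fun n => by positivity) (summable_const_mul_exp hc C)

lemma lintegral_exp_U (hmeas : ∀ N σ, Measurable (U N σ))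
    (hdist : ∀ N σ, P.map (U N σ) = gaussianReal 0 (N : NNReal)) (N : ℕ) (σ : Conf N) (t : ℝ) :
    ∫⁻ ω, ENNReal.ofReal (Real.exp (t * U N σ ω)) ∂P
      = ENNReal.ofReal (Real.exp ((N : ℝ) * t ^ 2 / 2)) := by
  have h : ∫⁻ ω, ENNReal.ofReal (Real.exp (t * U N σ ω)) ∂P
      = ∫⁻ x, ENNReal.ofReal (Real.exp (t * x)) ∂(P.map (U N σ)) := by
    rw [lintegral_map (by fun_prop) (hmeas N σ)]
  rw [h, hdist N σ, lintegral_exp_gaussianReal]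
  norm_num

lemma lintegral_sum_exp (hmeas : ∀ N σ, Measurable (U N σ))
    (hdist : ∀ N σ, P.map (U N σ) = gaussianReal 0 (N : NNReal)) (N : ℕ) (t c : ℝ) :
    ∫⁻ ω, ENNReal.ofReal (Real.exp c * (((2:ℝ) ^ N)⁻¹
        * ∑ σ : Conf N, Real.exp (t * U N σ ω))) ∂P
      = ENNReal.ofReal (Real.exp (c + (N : ℝ) * t ^ 2 / 2)) := by
  have h1 : ∀ ω, ENNReal.ofReal (Real.exp c * (((2:ℝ) ^ N)⁻¹
        * ∑ σ : Conf N, Real.exp (t * U N σ ω)))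
      = ENNReal.ofReal (Real.exp c * ((2:ℝ) ^ N)⁻¹)
        * ∑ σ : Conf N, ENNReal.ofReal (Real.exp (t * U N σ ω)) := by
    intro ω
    rw [← mul_assoc, ENNReal.ofReal_mul (by positivity), ENNReal.ofReal_sum_of_nonneg
      (fun σ _ => (Real.exp_pos _).le)]
  simp only [h1]
  rw [lintegral_const_mul _ (by fun_prop), lintegral_finset_sum _ (fun σ _ => by fun_prop)]
  simp only [lintegral_exp_U hmeas hdist]
  rw [Finset.sum_const, Finset.card_univ, card_conf, nsmul_eq_mul]
  rw [← mul_assoc, ← ENNReal.ofReal_natCast, ← ENNReal.ofReal_mul (by positivity),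
    ← ENNReal.ofReal_mul (by positivity)]
  congr 1
  push_cast
  rw [show rexp c * ((2:ℝ)^N)⁻¹ * (2:ℝ)^N * rexp ((N:ℝ)*t^2/2) = rexp c * rexp ((N:ℝ)*t^2/2) by
    field_simp, ← Real.exp_add]

/-- The annealed Markov bound. -/
lemma annealed_markov (hmeas : ∀ N σ, Measurable (U N σ))
    (hdist : ∀ N σ, P.map (U N σ) = gaussianReal 0 (N : NNReal)) (N : ℕ) (t c : ℝ) {δ : ℝ}
    (hδ : 0 < δ) :
    P {ω | Real.exp (c + (N : ℝ) * t ^ 2 / 2 + δ) ≤ Real.exp c * (((2:ℝ) ^ N)⁻¹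
        * ∑ σ : Conf N, Real.exp (t * U N σ ω))}
      ≤ ENNReal.ofReal (Real.exp (-δ)) := by
  have hmS : Measurable fun ω => Real.exp c * (((2:ℝ) ^ N)⁻¹
      * ∑ σ : Conf N, Real.exp (t * U N σ ω)) := by
    refine Measurable.const_mul (Measurable.const_mul ?_ _) _
    exact Finset.measurable_sum _ fun σ _ => Real.measurable_exp.comp ((hmeas N σ).const_mul t)
  have h := markov_exp (P := P) (a := Real.exp (c + (N : ℝ) * t ^ 2 / 2 + δ)) hmS.aemeasurable
    (le_of_eq (lintegral_sum_exp hmeas hdist N t c)) (Real.exp_pos _)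
  refine le_trans h (le_of_eq ?_)
  rw [← Real.exp_sub]
  congr 1
  ring

/-- Tail bound for a single Gaussian. -/
lemma tail_markov (hmeas : ∀ N σ, Measurable (U N σ))
    (hdist : ∀ N σ, P.map (U N σ) = gaussianReal 0 (N : NNReal)) (N : ℕ) (σ : Conf N) {b : ℝ}
    (hb : 0 < b) :
    P {ω | U N σ ω ≤ -((N : ℝ) * b)} ≤ ENNReal.ofReal (Real.exp (-((N:ℝ) * b ^ 2 / 2))) := by
  have hsub : {ω | U N σ ω ≤ -((N : ℝ) * b)}
      ⊆ {ω | Real.exp ((N:ℝ) * b ^ 2) ≤ Real.exp (-b * U N σ ω)} := by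
    intro ω hω
    rw [Set.mem_setOf_eq, Real.exp_le_exp]
    have : U N σ ω ≤ -((N:ℝ) * b) := hω
    nlinarith
  refine le_trans (measure_mono hsub) (le_trans (markov_exp (by fun_prop)
    (le_of_eq (lintegral_exp_U hmeas hdist N σ (-b))) (Real.exp_pos _)) ?_)
  rw [← Real.exp_sub]
  apply le_of_eq
  congr 1
  ring_nf
end

section
variable {Ω : Type*} [MeasurableSpace Ω] {P : Measure Ω} [IsProbabilityMeasure P]
  {U : (N : ℕ) → Conf N → Ω → ℝ}

/-- Chebyshev bound on the number of configurations whose energy lies in `s`. -/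
lemma count_chebyshev (hmeas : ∀ N σ, Measurable (U N σ))
    (hindep : ∀ N, iIndepFun (m := fun _ : Conf N => Real.measurableSpace) (U N) P)
    (N : ℕ) {s : Set ℝ} (hs : MeasurableSet s) {q : ℝ}
    (hq : ∀ σ : Conf N, (P (U N σ ⁻¹' s)).toReal = q) (hq0 : 0 < q) :
    P {ω | (∑ σ : Conf N, s.indicator (fun _ => (1:ℝ)) (U N σ ω)) ≤ 2 ^ N * q / 2}
      ≤ ENNReal.ofReal (4 / (2 ^ N * q)) := by
  classical
  set f : ℝ → ℝ := s.indicator (fun _ => (1:ℝ)) with hf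
  have hfm : Measurable f := measurable_const.indicator hs
  set X : Conf N → Ω → ℝ := fun σ ω => f (U N σ ω) with hX
  have hXind : ∀ σ, X σ = (U N σ ⁻¹' s).indicator (fun _ => (1:ℝ)) := by
    intro σ
    funext ω
    by_cases h : U N σ ω ∈ s <;> simp [hX, hf, Set.indicator, h]
  have hXmem : ∀ σ : Conf N, MemLp (X σ) 2 P := by
    intro σ
    rw [hXind σ]
    exact memLp_indicator_const 2 ((hmeas N σ) hs) 1 (Or.inr (measure_ne_top P _))
  have hXint : ∀ σ : Conf N, P[X σ] = q := by
    intro σ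
    rw [hXind σ, integral_indicator_const _ ((hmeas N σ) hs), smul_eq_mul, mul_one, measureReal_def, hq σ]
  have hXsq : ∀ σ : Conf N, (X σ) ^ 2 = X σ := by
    intro σ
    funext ω
    rw [hXind σ]
    by_cases h : ω ∈ U N σ ⁻¹' s <;> simp [Set.indicator, h]
  have hXvar : ∀ σ : Conf N, variance (X σ) P ≤ q := by
    intro σ
    rw [variance_eq_sub (hXmem σ), hXsq σ, hXint σ]
    nlinarith [sq_nonneg q]
  have hCE : P[∑ σ : Conf N, X σ] = 2 ^ N * q := by
    simp only [Finset.sum_apply]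
    rw [integral_finset_sum _ (fun σ _ => (hXmem σ).integrable one_le_two)]
    simp only [hXint]
    rw [Finset.sum_const, Finset.card_univ, card_conf, nsmul_eq_mul]
    push_cast
    ring
  have hvar : variance (∑ σ : Conf N, X σ) P ≤ 2 ^ N * q := by
    rw [IndepFun.variance_sum (fun σ _ => hXmem σ)
      (fun σ _ τ _ hστ => IndepFun.comp ((hindep N).indepFun hστ) hfm hfm)]
    calc ∑ σ : Conf N, variance (X σ) P ≤ ∑ _σ : Conf N, q :=
          Finset.sum_le_sum fun σ _ => hXvar σ
      _ = 2 ^ N * q := by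
          rw [Finset.sum_const, Finset.card_univ, card_conf, nsmul_eq_mul]; push_cast; ring
  have hc : (0:ℝ) < 2 ^ N * q / 2 := by positivity
  have hcheb := meas_ge_le_variance_div_sq (μ := P) (X := ∑ σ : Conf N, X σ) (memLp_finsetSum' Finset.univ (fun σ _ => hXmem σ)) hc
  have hsub : {ω | ∑ σ : Conf N, f (U N σ ω) ≤ 2 ^ N * q / 2}
      ⊆ {ω | 2 ^ N * q / 2 ≤ |(∑ σ : Conf N, X σ) ω - P[∑ σ : Conf N, X σ]|} := by
    intro ω hω
    have h1 : ∑ σ : Conf N, X σ ω ≤ 2 ^ N * q / 2 := hω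
    have hCE2 : ∫ x, ∑ c : Conf N, X c x ∂P = 2 ^ N * q := by
      simpa [Finset.sum_apply] using hCE
    simp only [Set.mem_setOf_eq, Finset.sum_apply]
    rw [hCE2, abs_sub_comm, abs_of_nonneg (by linarith)]
    linarith
  have hfinal : ENNReal.ofReal (variance (∑ σ : Conf N, X σ) P / (2 ^ N * q / 2) ^ 2)
      ≤ ENNReal.ofReal (4 / (2 ^ N * q)) := by
    apply ENNReal.ofReal_le_ofReal
    rw [div_le_div_iff₀ (by positivity) (by positivity)]
    nlinarith [hvar, hq0, variance_nonneg (∑ σ : Conf N, X σ) P]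
  exact le_trans (measure_mono hsub) (le_trans hcheb hfinal)

end

noncomputable def βc : ℝ := Real.sqrt (2 * Real.log 2)
noncomputable def p0 (β : ℝ) : ℝ := if β ≤ βc then β ^ 2 / 2 else β * βc - Real.log 2

lemma βc_pos : 0 < βc := Real.sqrt_pos.2 (by positivity)
lemma βc_sq : βc ^ 2 = 2 * Real.log 2 := Real.sq_sqrt (by positivity)

lemma two_pow_eq_exp (N : ℕ) : (2:ℝ) ^ N = Real.exp (Real.log 2 * (N:ℝ)) := by
  rw [mul_comm, Real.exp_nat_mul, Real.exp_log two_pos]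

lemma sum_exp_pos (N : ℕ) (g : Conf N → ℝ) : 0 < ∑ σ : Conf N, Real.exp (g σ) :=
  Finset.sum_pos (fun σ _ => Real.exp_pos _) Finset.univ_nonempty

section Upper
variable {Ω : Type*} [MeasurableSpace Ω] {P : Measure Ω} [IsProbabilityMeasure P]
  {U : (N : ℕ) → Conf N → Ω → ℝ}

lemma upper_bound (hmeas : ∀ N σ, Measurable (U N σ))
    (hdist : ∀ N σ, P.map (U N σ) = gaussianReal 0 (N : NNReal))
    {β : ℝ} (hβ : 0 < β) {ε : ℝ} (hε : 0 < ε) :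
    ∀ᵐ ω ∂P, ∀ᶠ N : ℕ in atTop, (N:ℝ)⁻¹ * Real.log (((2:ℝ)^N)⁻¹
      * ∑ σ : Conf N, Real.exp (-β * U N σ ω)) ≤ p0 β + ε := by
  by_cases hcase : β ≤ βc
  · -- high temperature: annealed bound
    have hA : ∀ N : ℕ, P {ω | Real.exp (0 + (N:ℝ)*(-β)^2/2 + ((N:ℝ)*(ε/2) + ε/2))
        ≤ Real.exp 0 * (((2:ℝ)^N)⁻¹ * ∑ σ : Conf N, Real.exp (-β * U N σ ω))}
        ≤ ENNReal.ofReal (1 * Real.exp (-(ε/2) * N)) := by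
      intro N
      refine le_trans (annealed_markov hmeas hdist N (-β) 0 (by positivity)) ?_
      apply ENNReal.ofReal_le_ofReal
      rw [one_mul, Real.exp_le_exp]
      have : (0:ℝ) ≤ N := Nat.cast_nonneg N
      linarith
    have hBC := bc_eventually (P := P) (tsum_exp_ne_top (by positivity)
      (by norm_num : (0:ℝ) ≤ 1)) (Eventually.of_forall hA)
    filter_upwards [hBC] with ω hω
    filter_upwards [hω, eventually_ge_atTop 1] with N hAN h1
    simp only [Set.mem_setOf_eq, not_le, Real.exp_zero, one_mul] at hAN
    have hNpos : (0:ℝ) < N := by exact_mod_cast h1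
    have hg : 0 < ((2:ℝ)^N)⁻¹ * ∑ σ : Conf N, Real.exp (-β * U N σ ω) :=
      mul_pos (by positivity) (sum_exp_pos N _)
    have hlog : Real.log (((2:ℝ)^N)⁻¹ * ∑ σ : Conf N, Real.exp (-β * U N σ ω))
        ≤ (N:ℝ) * (β^2/2 + ε/2) + ε/2 := by
      have h2 := Real.log_le_log hg hAN.le
      rw [Real.log_exp] at h2
      nlinarith [h2]
    have hkey : (N:ℝ)⁻¹ * ((N:ℝ) * (β^2/2 + ε/2) + ε/2) = β^2/2 + ε/2 + ε/2 * (N:ℝ)⁻¹ := by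
      field_simp
    have hεN : ε/2 * (N:ℝ)⁻¹ ≤ ε/2 := by
      have h2 : (N:ℝ)⁻¹ ≤ 1 := by
        rw [inv_le_one_iff₀]; right; exact_mod_cast h1
      nlinarith
    rw [p0, if_pos hcase]
    calc (N:ℝ)⁻¹ * Real.log (((2:ℝ)^N)⁻¹ * ∑ σ : Conf N, Real.exp (-β * U N σ ω))
        ≤ (N:ℝ)⁻¹ * ((N:ℝ) * (β^2/2 + ε/2) + ε/2) :=
          mul_le_mul_of_nonneg_left hlog (by positivity)
      _ = β^2/2 + ε/2 + ε/2 * (N:ℝ)⁻¹ := hkey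
      _ ≤ β^2/2 + ε := by linarith
  · -- low temperature
    push_neg at hcase
    obtain ⟨ε', hε'1, hε'2, hε'⟩ : ∃ x : ℝ, x ≤ β - βc ∧ x ≤ ε/(4*β) ∧ 0 < x :=
      ⟨min (β - βc) (ε/(4*β)), min_le_left _ _, min_le_right _ _,
        lt_min (by linarith) (by positivity)⟩
    obtain ⟨b, hbdef⟩ : ∃ b : ℝ, b = βc + ε' := ⟨_, rfl⟩
    have hbgt : βc < b := by rw [hbdef]; linarith
    have hb0 : 0 < b := lt_trans βc_pos hbgt
    have hbβ : b ≤ β := by rw [hbdef]; linarith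
    have hc₁ : 0 < b^2/2 - Real.log 2 := by
      have h2 : βc^2 < b^2 := by nlinarith [βc_pos]
      nlinarith [βc_sq]
    -- event A1: some energy below -N*b
    have hA1 : ∀ N : ℕ, P {ω | ∃ σ : Conf N, U N σ ω ≤ -((N:ℝ)*b)}
        ≤ ENNReal.ofReal (1 * Real.exp (-(b^2/2 - Real.log 2) * N)) := by
      intro N
      have hunion : {ω | ∃ σ : Conf N, U N σ ω ≤ -((N:ℝ)*b)}
          = ⋃ σ : Conf N, {ω | U N σ ω ≤ -((N:ℝ)*b)} := by
        ext ω; simp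
      rw [hunion]
      refine le_trans (measure_iUnion_le _) ?_
      rw [tsum_fintype]
      refine le_trans (Finset.sum_le_sum (fun σ _ => tail_markov hmeas hdist N σ hb0)) ?_
      rw [Finset.sum_const, Finset.card_univ, card_conf, nsmul_eq_mul]
      have hcast : ((2^N : ℕ) : ℝ≥0∞) = ENNReal.ofReal ((2:ℝ)^N) := by
        rw [← ENNReal.ofReal_natCast]
        norm_num
      rw [hcast, ← ENNReal.ofReal_mul (by positivity)]
      apply ENNReal.ofReal_le_ofReal
      rw [one_mul, two_pow_eq_exp, ← Real.exp_add, Real.exp_le_exp]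
      ring_nf
      exact le_refl _
    -- event A2: truncated annealed bound
    have hA2 : ∀ N : ℕ, P {ω | Real.exp ((N:ℝ)*(b*(β-b)) + (N:ℝ)*(-b)^2/2 + ((N:ℝ)*(ε/4)+ε/4))
        ≤ Real.exp ((N:ℝ)*(b*(β-b))) * (((2:ℝ)^N)⁻¹ * ∑ σ : Conf N, Real.exp (-b * U N σ ω))}
        ≤ ENNReal.ofReal (1 * Real.exp (-(ε/4) * N)) := by
      intro N
      refine le_trans (annealed_markov hmeas hdist N (-b) ((N:ℝ)*(b*(β-b))) (by positivity)) ?_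
      apply ENNReal.ofReal_le_ofReal
      rw [one_mul, Real.exp_le_exp]
      have : (0:ℝ) ≤ N := Nat.cast_nonneg N
      linarith
    have hBC1 := bc_eventually (P := P) (tsum_exp_ne_top hc₁ (by norm_num : (0:ℝ) ≤ 1))
      (Eventually.of_forall hA1)
    have hBC2 := bc_eventually (P := P) (tsum_exp_ne_top (by positivity)
      (by norm_num : (0:ℝ) ≤ 1)) (Eventually.of_forall hA2)
    filter_upwards [hBC1, hBC2] with ω hω1 hω2
    filter_upwards [hω1, hω2, eventually_ge_atTop 1] with N hN1 hN2 h1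
    simp only [Set.mem_setOf_eq, not_exists, not_le] at hN1
    simp only [Set.mem_setOf_eq, not_le] at hN2
    have hNpos : (0:ℝ) < N := by exact_mod_cast h1
    have hg : 0 < ((2:ℝ)^N)⁻¹ * ∑ σ : Conf N, Real.exp (-β * U N σ ω) :=
      mul_pos (by positivity) (sum_exp_pos N _)
    -- termwise comparison
    have hterm : ∀ σ : Conf N, Real.exp (-β * U N σ ω)
        ≤ Real.exp ((N:ℝ)*(b*(β-b))) * Real.exp (-b * U N σ ω) := by
      intro σ
      rw [← Real.exp_add, Real.exp_le_exp]
      have h3 := hN1 σ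
      nlinarith [hN1 σ, sub_nonneg.2 hbβ]
    have hsum : ((2:ℝ)^N)⁻¹ * ∑ σ : Conf N, Real.exp (-β * U N σ ω)
        ≤ Real.exp ((N:ℝ)*(b*(β-b))) * (((2:ℝ)^N)⁻¹ * ∑ σ : Conf N, Real.exp (-b * U N σ ω)) := by
      calc ((2:ℝ)^N)⁻¹ * ∑ σ : Conf N, Real.exp (-β * U N σ ω)
          ≤ ((2:ℝ)^N)⁻¹ * ∑ σ : Conf N, Real.exp ((N:ℝ)*(b*(β-b))) * Real.exp (-b * U N σ ω) :=
            mul_le_mul_of_nonneg_left (Finset.sum_le_sum fun σ _ => hterm σ) (by positivity)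
        _ = Real.exp ((N:ℝ)*(b*(β-b))) * (((2:ℝ)^N)⁻¹ * ∑ σ : Conf N, Real.exp (-b * U N σ ω)) := by
            rw [← Finset.mul_sum]
            ring
    have hlog : Real.log (((2:ℝ)^N)⁻¹ * ∑ σ : Conf N, Real.exp (-β * U N σ ω))
        ≤ (N:ℝ)*(b*(β-b)) + (N:ℝ)*b^2/2 + ((N:ℝ)*(ε/4)+ε/4) := by
      have h2 := Real.log_le_log hg (le_trans hsum hN2.le)
      rw [Real.log_exp] at h2
      nlinarith [h2]
    have hεN : ε/4 * (N:ℝ)⁻¹ ≤ ε/4 := by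
      have h2 : (N:ℝ)⁻¹ ≤ 1 := by
        rw [inv_le_one_iff₀]; right; exact_mod_cast h1
      nlinarith
    have hkey : (N:ℝ)⁻¹ * ((N:ℝ)*(b*(β-b)) + (N:ℝ)*b^2/2 + ((N:ℝ)*(ε/4)+ε/4))
        = b*β - b^2/2 + ε/4 + ε/4 * (N:ℝ)⁻¹ := by
      field_simp
      ring
    have hβε' : β * ε' ≤ ε/4 := by
      have h4 : ε' ≤ ε/(4*β) := hε'2
      calc β * ε' ≤ β * (ε/(4*β)) := mul_le_mul_of_nonneg_left h4 hβ.le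
        _ = ε/4 := by field_simp
    have hfin : b*β - b^2/2 ≤ β * βc - Real.log 2 + ε/4 := by
      have h5 : βc^2 ≤ b^2 := pow_le_pow_left₀ βc_pos.le hbgt.le 2
      have h6 : b*β = β*βc + β*ε' := by rw [hbdef]; ring
      linarith [βc_sq, hβε']
    rw [p0, if_neg (not_le.2 hcase)]
    calc (N:ℝ)⁻¹ * Real.log (((2:ℝ)^N)⁻¹ * ∑ σ : Conf N, Real.exp (-β * U N σ ω))
        ≤ (N:ℝ)⁻¹ * ((N:ℝ)*(b*(β-b)) + (N:ℝ)*b^2/2 + ((N:ℝ)*(ε/4)+ε/4)) :=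
          mul_le_mul_of_nonneg_left hlog (by positivity)
      _ = b*β - b^2/2 + ε/4 + ε/4 * (N:ℝ)⁻¹ := hkey
      _ ≤ β * βc - Real.log 2 + ε := by linarith

end Upper

section Lower
variable {Ω : Type*} [MeasurableSpace Ω] {P : Measure Ω} [IsProbabilityMeasure P]
  {U : (N : ℕ) → Conf N → Ω → ℝ}

set_option maxHeartbeats 1000000 in
lemma lower_bound (hmeas : ∀ N σ, Measurable (U N σ))
    (hdist : ∀ N σ, P.map (U N σ) = gaussianReal 0 (N : NNReal))
    (hindep : ∀ N, iIndepFun (m := fun _ : Conf N => Real.measurableSpace) (U N) P)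
    {β : ℝ} (hβ : 0 < β) {ε : ℝ} (hε : 0 < ε) :
    ∀ᵐ ω ∂P, ∀ᶠ N : ℕ in atTop, p0 β - ε ≤ (N:ℝ)⁻¹ * Real.log (((2:ℝ)^N)⁻¹
      * ∑ σ : Conf N, Real.exp (-β * U N σ ω)) := by
  -- choice of parameters
  obtain ⟨t, ht1, ht2, ht0, htp⟩ : ∃ t : ℝ, t ≤ β ∧ t ≤ βc ∧ 0 < t ∧ β*t - t^2/2 = p0 β := by
    by_cases hc : β ≤ βc
    · exact ⟨β, le_refl _, hc, hβ, by rw [p0, if_pos hc]; ring⟩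
    · push_neg at hc
      exact ⟨βc, hc.le, le_refl _, βc_pos, by rw [p0, if_neg (not_le.2 hc)]; linarith [βc_sq]⟩
  obtain ⟨η, hη1, hη2, hη0⟩ : ∃ y : ℝ, y ≤ t/4 ∧ y ≤ ε/(8*β) ∧ 0 < y :=
    ⟨min (t/4) (ε/(8*β)), min_le_left _ _, min_le_right _ _,
      lt_min (by positivity) (by positivity)⟩
  obtain ⟨x, hxdef⟩ : ∃ x : ℝ, x = t - 2*η := ⟨_, rfl⟩
  have hx0 : 0 < x := by rw [hxdef]; linarith
  have hxβc : x < βc := by rw [hxdef]; linarith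
  have hc₂ : 0 < Real.log 2 - x^2/2 := by
    have h1 : x^2 < βc^2 := by nlinarith [βc_pos]
    linarith [βc_sq]
  obtain ⟨K, hKdef⟩ : ∃ K : ℝ, K = η * (2*π)⁻¹ * Real.exp (-(x*η + η*η)) := ⟨_, rfl⟩
  have hK0 : 0 < K := by rw [hKdef]; positivity
  -- the probability that a given energy lies in the window
  obtain ⟨q, hqdef⟩ : ∃ q : ℕ → ℝ, q = fun N : ℕ =>
      (gaussianReal 0 (N:ℝ≥0) (Set.Icc (-((N:ℝ)*x) - η) (-((N:ℝ)*x)))).toReal := ⟨_, rfl⟩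
  have hq_eq : ∀ (N : ℕ) (σ : Conf N),
      (P (U N σ ⁻¹' Set.Icc (-((N:ℝ)*x) - η) (-((N:ℝ)*x)))).toReal = q N := by
    intro N σ
    rw [hqdef, ← Measure.map_apply (hmeas N σ) measurableSet_Icc, hdist N σ]
  have hq_lb : ∀ N : ℕ, 1 ≤ N → K * (N:ℝ)⁻¹ * Real.exp (-(x^2/2) * N) ≤ q N := by
    intro N hN
    have hN0 : ((N:ℕ) : ℝ≥0) ≠ 0 := Nat.cast_ne_zero.2 (by omega)
    have hNR : (1:ℝ) ≤ (N:ℝ) := by exact_mod_cast hN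
    have hNpos : (0:ℝ) < N := by linarith
    have hIcc := gaussianReal_Icc_ge (v := (N:ℝ≥0)) hN0
      (a := -((N:ℝ)*x) - η) (b := -((N:ℝ)*x)) (by linarith) (by nlinarith)
    rw [hqdef]
    refine le_trans ?_ hIcc
    have hba : -((N:ℝ)*x) - (-((N:ℝ)*x) - η) = η := by ring
    rw [hba, gaussianPDFReal]
    push_cast
    have e1 : (2*π)⁻¹ * (N:ℝ)⁻¹ ≤ (Real.sqrt (2*π*(N:ℝ)))⁻¹ := by
      rw [← mul_inv]
      apply inv_anti₀ (Real.sqrt_pos.2 (by positivity))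
      have hy : (1:ℝ) ≤ 2*π*(N:ℝ) := by
        have h8 : π * 1 ≤ π * (N:ℝ) := mul_le_mul_of_nonneg_left hNR pi_pos.le
        nlinarith [pi_gt_three]
      calc Real.sqrt (2*π*(N:ℝ)) ≤ Real.sqrt ((2*π*(N:ℝ))^2) := by
            apply Real.sqrt_le_sqrt
            nlinarith [hy]
        _ = 2*π*(N:ℝ) := Real.sqrt_sq (by positivity)
    have e2 : Real.exp (-(x*η + η*η)) * Real.exp (-(x^2/2)*(N:ℝ))
        ≤ Real.exp (-(-((N:ℝ)*x) - η - 0)^2 / (2*(N:ℝ))) := by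
      rw [← Real.exp_add, Real.exp_le_exp]
      have hsq : (-((N:ℝ)*x) - η - 0)^2 = ((N:ℝ)*x + η)^2 := by ring
      rw [hsq, neg_div, le_neg]
      rw [div_le_iff₀ (by positivity : (0:ℝ) < 2*(N:ℝ))]
      nlinarith [sq_nonneg η, hNR, hη0]
    calc K * (N:ℝ)⁻¹ * Real.exp (-(x^2/2)*(N:ℝ))
        = η * (((2*π)⁻¹ * (N:ℝ)⁻¹) * (Real.exp (-(x*η + η*η)) * Real.exp (-(x^2/2)*(N:ℝ)))) := by
          rw [hKdef]; ring
      _ ≤ η * ((Real.sqrt (2*π*(N:ℝ)))⁻¹ * Real.exp (-(-((N:ℝ)*x) - η - 0)^2 / (2*(N:ℝ)))) := by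
          refine mul_le_mul_of_nonneg_left (mul_le_mul e1 e2 (by positivity) (by positivity))
            hη0.le
  have hq_pos : ∀ N : ℕ, 1 ≤ N → 0 < q N := fun N hN =>
    lt_of_lt_of_le (by positivity) (hq_lb N hN)
  -- Chebyshev events
  have hD : ∀ N : ℕ, 1 ≤ N →
      P {ω | (∑ σ : Conf N, (Set.Icc (-((N:ℝ)*x) - η) (-((N:ℝ)*x))).indicator
          (fun _ => (1:ℝ)) (U N σ ω)) ≤ 2^N * q N / 2}
        ≤ ENNReal.ofReal ((4/K) * ((N:ℝ) * Real.exp (-(Real.log 2 - x^2/2) * N))) := by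
    intro N hN
    have hNR : (1:ℝ) ≤ (N:ℝ) := by exact_mod_cast hN
    have hNpos : (0:ℝ) < N := by linarith
    refine le_trans (count_chebyshev hmeas hindep N measurableSet_Icc (hq_eq N)
      (hq_pos N hN)) ?_
    apply ENNReal.ofReal_le_ofReal
    have h1 : K * (N:ℝ)⁻¹ * Real.exp (-(x^2/2)*N) ≤ q N := hq_lb N hN
    calc (4:ℝ) / (2^N * q N)
        ≤ 4 / (2^N * (K * (N:ℝ)⁻¹ * Real.exp (-(x^2/2)*N))) := by
          apply div_le_div_of_nonneg_left (by norm_num) (by positivity)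
          exact mul_le_mul_of_nonneg_left h1 (by positivity)
      _ = (4/K) * ((N:ℝ) * Real.exp (-(Real.log 2 - x^2/2) * N)) := by
          rw [two_pow_eq_exp,
            show -(Real.log 2 - x^2/2)*(N:ℝ) = -(Real.log 2 * N) + -(-(x^2/2)*(N:ℝ)) by ring,
            Real.exp_add, Real.exp_neg, Real.exp_neg]
          field_simp
  have hsumD : ∑' N : ℕ, ENNReal.ofReal ((4/K) * ((N:ℝ)
      * Real.exp (-(Real.log 2 - x^2/2) * N))) ≠ ⊤ := by
    apply tsum_of_summable_ne_top (fun n => by positivity)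
    apply Summable.mul_left
    have h2 : Summable (fun n : ℕ => (n:ℝ) * (Real.exp (-(Real.log 2 - x^2/2)))^n) := by
      have := summable_pow_mul_geometric_of_norm_lt_one (R := ℝ) 1
        (r := Real.exp (-(Real.log 2 - x^2/2)))
        (by rw [Real.norm_eq_abs, abs_of_pos (Real.exp_pos _)]
            exact Real.exp_lt_one_iff.2 (by linarith))
      simpa using this
    simpa [← Real.exp_nat_mul, mul_comm] using h2
  have hBCD := bc_eventually (P := P) hsumD (eventually_atTop.2 ⟨1, hD⟩)
  -- deterministic error terms
  have hconst : Tendsto (fun N : ℕ => Real.log (K/2) * (N:ℝ)⁻¹ - Real.log (N:ℝ) * (N:ℝ)⁻¹)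
      atTop (nhds 0) := by
    have h1 : Tendsto (fun N : ℕ => (N:ℝ)⁻¹) atTop (nhds 0) := tendsto_inv_atTop_nhds_zero_nat
    have h3 : Tendsto (fun N : ℕ => Real.log (N:ℝ) / (N:ℝ)) atTop (nhds 0) :=
      (Real.isLittleO_log_id_atTop.tendsto_div_nhds_zero).comp tendsto_natCast_atTop_atTop
    have h4 := (h1.const_mul (Real.log (K/2))).sub h3
    have h6 : Real.log (K/2) * 0 - 0 = 0 := by ring
    rw [show (fun N : ℕ => Real.log (K/2) * (N:ℝ)⁻¹ - Real.log (N:ℝ) * (N:ℝ)⁻¹)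
        = fun N : ℕ => Real.log (K/2) * (N:ℝ)⁻¹ - Real.log (N:ℝ) / (N:ℝ)
        from funext fun n => by ring, ← h6]
    exact h4
  have hdet : ∀ᶠ N : ℕ in atTop,
      -(ε/2) < Real.log (K/2) * (N:ℝ)⁻¹ - Real.log (N:ℝ) * (N:ℝ)⁻¹ :=
    hconst.eventually (eventually_gt_nhds (by linarith))
  -- combine
  filter_upwards [hBCD] with ω hω
  filter_upwards [hω, hdet, eventually_ge_atTop 1] with N hDN hdetN hN1
  have hNR : (1:ℝ) ≤ (N:ℝ) := by exact_mod_cast hN1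
  have hNpos : (0:ℝ) < N := by linarith
  simp only [Set.mem_setOf_eq, not_le] at hDN
  have hterm : ∀ σ : Conf N, (Set.Icc (-((N:ℝ)*x) - η) (-((N:ℝ)*x))).indicator
      (fun _ => (1:ℝ)) (U N σ ω) * Real.exp (β*((N:ℝ)*x)) ≤ Real.exp (-β * U N σ ω) := by
    intro σ
    by_cases hmem : U N σ ω ∈ Set.Icc (-((N:ℝ)*x) - η) (-((N:ℝ)*x))
    · rw [Set.indicator_of_mem hmem, one_mul, Real.exp_le_exp]
      have h7 : U N σ ω ≤ -((N:ℝ)*x) := hmem.2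
      calc β*((N:ℝ)*x) = β * -(-((N:ℝ)*x)) := by ring
        _ ≤ β * -(U N σ ω) := mul_le_mul_of_nonneg_left (neg_le_neg h7) hβ.le
        _ = -β * U N σ ω := by ring
    · rw [Set.indicator_of_notMem hmem, zero_mul]
      exact (Real.exp_pos _).le
  have hsum : (2^N * q N / 2) * Real.exp (β*((N:ℝ)*x))
      ≤ ∑ σ : Conf N, Real.exp (-β * U N σ ω) := by
    calc (2^N * q N / 2) * Real.exp (β*((N:ℝ)*x))
        ≤ (∑ σ : Conf N, (Set.Icc (-((N:ℝ)*x) - η) (-((N:ℝ)*x))).indicator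
            (fun _ => (1:ℝ)) (U N σ ω)) * Real.exp (β*((N:ℝ)*x)) :=
          mul_le_mul_of_nonneg_right hDN.le (Real.exp_pos _).le
      _ = ∑ σ : Conf N, (Set.Icc (-((N:ℝ)*x) - η) (-((N:ℝ)*x))).indicator
            (fun _ => (1:ℝ)) (U N σ ω) * Real.exp (β*((N:ℝ)*x)) := Finset.sum_mul _ _ _
      _ ≤ ∑ σ : Conf N, Real.exp (-β * U N σ ω) := Finset.sum_le_sum fun σ _ => hterm σ
  have hq1 : K * (N:ℝ)⁻¹ * Real.exp (-(x^2/2)*N) ≤ q N := hq_lb N hN1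
  have hZ : (K/2) * (N:ℝ)⁻¹ * Real.exp ((β*x - x^2/2) * N)
      ≤ ((2:ℝ)^N)⁻¹ * ∑ σ : Conf N, Real.exp (-β * U N σ ω) := by
    have h2 := mul_le_mul_of_nonneg_left hsum
      (by positivity : (0:ℝ) ≤ ((2:ℝ)^N)⁻¹)
    calc (K/2) * (N:ℝ)⁻¹ * Real.exp ((β*x - x^2/2)*N)
        = (K * (N:ℝ)⁻¹ * Real.exp (-(x^2/2)*N)) / 2 * Real.exp (β*((N:ℝ)*x)) := by
          rw [show (β*x - x^2/2)*(N:ℝ) = -(x^2/2)*(N:ℝ) + β*((N:ℝ)*x) by ring, Real.exp_add]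
          ring
      _ ≤ q N / 2 * Real.exp (β*((N:ℝ)*x)) :=
          mul_le_mul_of_nonneg_right (by linarith) (Real.exp_pos _).le
      _ = ((2:ℝ)^N)⁻¹ * ((2^N * q N / 2) * Real.exp (β*((N:ℝ)*x))) := by
          have : ((2:ℝ)^N) ≠ 0 := by positivity
          field_simp
      _ ≤ ((2:ℝ)^N)⁻¹ * ∑ σ : Conf N, Real.exp (-β * U N σ ω) := h2
  have hZpos : 0 < (K/2) * (N:ℝ)⁻¹ * Real.exp ((β*x - x^2/2) * N) := by positivity
  have hlog := Real.log_le_log hZpos hZ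
  have hlogL : Real.log ((K/2) * (N:ℝ)⁻¹ * Real.exp ((β*x - x^2/2)*N))
      = Real.log (K/2) + -(Real.log (N:ℝ)) + (β*x - x^2/2)*N := by
    rw [Real.log_mul (by positivity) (Real.exp_ne_zero _),
      Real.log_mul (by positivity) (by positivity), Real.log_exp, Real.log_inv]
  have hmono := mul_le_mul_of_nonneg_left hlog (by positivity : (0:ℝ) ≤ (N:ℝ)⁻¹)
  have hexp : (N:ℝ)⁻¹ * (Real.log (K/2) + -(Real.log (N:ℝ)) + (β*x - x^2/2)*N)
      = Real.log (K/2) * (N:ℝ)⁻¹ - Real.log (N:ℝ) * (N:ℝ)⁻¹ + (β*x - x^2/2) := by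
    field_simp
    ring
  have hfinal : p0 β - ε
      ≤ Real.log (K/2) * (N:ℝ)⁻¹ - Real.log (N:ℝ) * (N:ℝ)⁻¹ + (β*x - x^2/2) := by
    have h5 : β*t - t^2/2 - 2*β*η ≤ β*x - x^2/2 := by
      rw [hxdef]
      nlinarith [hη1, hη0, ht0, hβ]
    have h6 : 2*β*η ≤ ε/4 := by
      calc 2*β*η ≤ 2*β*(ε/(8*β)) := by
            apply mul_le_mul_of_nonneg_left hη2 (by positivity)
        _ = ε/4 := by field_simp; ring
    rw [htp] at h5
    linarith [hdetN]
  calc p0 β - ε ≤ Real.log (K/2) * (N:ℝ)⁻¹ - Real.log (N:ℝ) * (N:ℝ)⁻¹ + (β*x - x^2/2) := hfinal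
    _ = (N:ℝ)⁻¹ * (Real.log (K/2) + -(Real.log (N:ℝ)) + (β*x - x^2/2)*N) := hexp.symm
    _ = (N:ℝ)⁻¹ * Real.log ((K/2) * (N:ℝ)⁻¹ * Real.exp ((β*x - x^2/2)*N)) := by rw [hlogL]
    _ ≤ (N:ℝ)⁻¹ * Real.log (((2:ℝ)^N)⁻¹ * ∑ σ : Conf N, Real.exp (-β * U N σ ω)) := hmono

end Lower

/-- Derrida's REM free-energy theorem: almost surely
`N⁻¹ ln(2^{-N} Σ_σ e^{−βU(σ)}) → p₀(β)`. -/
theorem stmt13 {Ω : Type*} [MeasurableSpace Ω] (P : Measure Ω) [IsProbabilityMeasure P]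
    (U : (N : ℕ) → Conf N → Ω → ℝ)
    (hmeas : ∀ N σ, Measurable (U N σ))
    (hdist : ∀ N σ, P.map (U N σ) = gaussianReal 0 (N : NNReal))
    (hindep : ∀ N, iIndepFun (m := fun _ : Conf N => Real.measurableSpace) (U N) P)
    (β : ℝ) (hβ : 0 ≤ β) :
    ∀ᵐ ω ∂P, Filter.Tendsto (fun N : ℕ =>
        (N : ℝ)⁻¹ * Real.log (((2 : ℝ) ^ N)⁻¹ * ∑ σ : Conf N, Real.exp (-β * U N σ ω)))
      Filter.atTop (nhds (p0 β)) := by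
  rcases eq_or_lt_of_le hβ with hβ0 | hβpos
  · -- β = 0 : the partition function is identically 1
    refine ae_of_all _ (fun ω => ?_)
    have hfun : (fun N : ℕ => (N : ℝ)⁻¹ * Real.log (((2 : ℝ) ^ N)⁻¹
        * ∑ σ : Conf N, Real.exp (-β * U N σ ω))) = fun _ : ℕ => 0 := by
      funext N
      rw [← hβ0]
      simp only [neg_zero, zero_mul, Real.exp_zero, Finset.sum_const, Finset.card_univ,
        card_conf, nsmul_eq_mul, mul_one]
      rw [show ((2:ℝ)^N)⁻¹ * ((2^N : ℕ) : ℝ) = 1 by push_cast; field_simp]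
      simp
    rw [hfun]
    have hp : p0 β = 0 := by
      rw [← hβ0, p0, if_pos βc_pos.le]
      norm_num
    rw [hp]
    exact tendsto_const_nhds
  · -- β > 0
    have key : ∀ k : ℕ, ∀ᵐ ω ∂P, ∀ᶠ N : ℕ in atTop,
        |(N : ℝ)⁻¹ * Real.log (((2 : ℝ) ^ N)⁻¹ * ∑ σ : Conf N, Real.exp (-β * U N σ ω))
          - p0 β| ≤ 1/(k+1) := by
      intro k
      have hk : (0:ℝ) < 1/(k+1) := by positivity
      filter_upwards [upper_bound hmeas hdist hβpos hk, lower_bound hmeas hdist hindep hβpos hk]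
        with ω h1 h2
      filter_upwards [h1, h2] with N hup hlo
      rw [abs_le]
      constructor <;> linarith
    rw [← ae_all_iff] at key
    filter_upwards [key] with ω hω
    rw [Metric.tendsto_atTop]
    intro δ hδ
    obtain ⟨k, hk⟩ := exists_nat_one_div_lt hδ
    obtain ⟨N₀, hN₀⟩ := eventually_atTop.1 (hω k)
    refine ⟨N₀, fun n hn => ?_⟩
    rw [Real.dist_eq]
    exact lt_of_le_of_lt (hN₀ n hn) hk
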